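/- Let l ≥ 1 and let R = {±e_i : 1 ≤ i ≤ l} ∪ {±2e_i : 1 ≤ i ≤ l} ∪ {±e_i ± e_j : 1 ≤ i < j ≤ l} ⊂ ℝˡ be the (nonreduced) root system of type BC_l. Then every parabolic subset of R is a principal parabolic subset, i.e. for every parabolic P ⊆ R there exists a linear functional λ on ℝˡ with P = {α ∈ R : λ(α) ≥ 0}. -/
import Mathlib


/-- A subset `P` of `Δ` is *parabolic* if `P ∪ (−P) = Δ` and `P` is closed. -/
def IsParabolicIn {V : Type*} [AddCommGroup V] (Δ P : Set V) : Prop :=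
  P ∪ (-P) = Δ ∧ ∀ α ∈ P, ∀ β ∈ P, α + β ∈ Δ → α + β ∈ P

/-- `P` is *principal parabolic* in `Δ` if `P = {α ∈ Δ | λ α ≥ 0}` for some linear
functional `λ`. -/
def IsPrincipalParabolicIn {V : Type*} [AddCommGroup V] [Module ℝ V] (Δ P : Set V) : Prop :=
  ∃ l : V →ₗ[ℝ] ℝ, P = {α ∈ Δ | 0 ≤ l α}

/-- The standard basis vector `e i` of `ℝˡ`. -/
def stdBasis (l : ℕ) (i : Fin l) : Fin l → ℝ := Pi.single i 1

/-- The nonreduced root system of type `BC_l`: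
`{±e_i} ∪ {±2e_i} ∪ {±e_i ± e_j : i < j}`. -/
def BCRoots (l : ℕ) : Set (Fin l → ℝ) :=
  {v | (∃ i : Fin l, v = stdBasis l i ∨ v = -stdBasis l i ∨
          v = (2 : ℝ) • stdBasis l i ∨ v = -((2 : ℝ) • stdBasis l i)) ∨
       (∃ i j : Fin l, i < j ∧
          (v = stdBasis l i + stdBasis l j ∨ v = stdBasis l i - stdBasis l j ∨
           v = -stdBasis l i + stdBasis l j ∨ v = -stdBasis l i - stdBasis l j))}

namespace BCAux

/-- Signed indices: `none` is `0`, `some (i, true)` is `e_i`, `some (i, false)` is `-e_i`. -/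
abbrev SIdx (l : ℕ) := Option (Fin l × Bool)

/-- The vector associated to a signed index. -/
def fv (l : ℕ) : SIdx l → (Fin l → ℝ)
  | none => 0
  | some (i, true) => stdBasis l i
  | some (i, false) => -stdBasis l i

/-- Negation of a signed index. -/
def sneg {l : ℕ} : SIdx l → SIdx l
  | none => none
  | some (i, b) => some (i, !b)

lemma fv_sneg {l : ℕ} (u : SIdx l) : fv l (sneg u) = - fv l u := by
  rcases u with _ | ⟨i, b⟩
  · simp [fv, sneg]
  · cases b <;> simp [fv, sneg]

lemma stdBasis_ne_zero {l : ℕ} (i : Fin l) : stdBasis l i ≠ 0 := by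
  intro h
  have := congrFun h i
  simp [stdBasis] at this

lemma zero_not_mem (l : ℕ) : (0 : Fin l → ℝ) ∉ BCRoots l := by
  rintro (⟨i, h | h | h | h⟩ | ⟨i, j, hij, h | h | h | h⟩) <;>
    have hi := congrFun h i <;>
    first
      | simp [stdBasis, Pi.single_apply, hij.ne] at hi
      | simp [stdBasis, Pi.single_apply] at hi

lemma two_smul_eq {l : ℕ} (i : Fin l) :
    stdBasis l i - (-stdBasis l i) = (2 : ℝ) • stdBasis l i := by
  rw [sub_neg_eq_add, two_smul]

/-- The difference of two distinct signed-index vectors is a root. -/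
lemma diff_mem {l : ℕ} {u v : SIdx l} (h : u ≠ v) : fv l u - fv l v ∈ BCRoots l := by
  rcases u with _ | ⟨i, bi⟩ <;> rcases v with _ | ⟨j, bj⟩
  · exact absurd rfl h
  · cases bj
    · exact Or.inl ⟨j, Or.inl (by simp [fv])⟩
    · exact Or.inl ⟨j, Or.inr (Or.inl (by simp [fv]))⟩
  · cases bi
    · exact Or.inl ⟨i, Or.inr (Or.inl (by simp [fv]))⟩
    · exact Or.inl ⟨i, Or.inl (by simp [fv])⟩
  · rcases lt_trichotomy i j with hij | rfl | hij
    · cases bi <;> cases bj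
      · -- -e_i - (-e_j) = -e_i + e_j
        exact Or.inr ⟨i, j, hij, Or.inr (Or.inr (Or.inl (by simp [fv]; try abel)))⟩
      · -- -e_i - e_j
        exact Or.inr ⟨i, j, hij, Or.inr (Or.inr (Or.inr (by simp [fv]; try abel)))⟩
      · -- e_i - (-e_j) = e_i + e_j
        exact Or.inr ⟨i, j, hij, Or.inl (by simp [fv]; try abel)⟩
      · -- e_i - e_j
        exact Or.inr ⟨i, j, hij, Or.inr (Or.inl (by simp [fv]))⟩
    · cases bi <;> cases bj
      · exact absurd rfl h
      · -- -e_i - e_i = -(2 e_i)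
        exact Or.inl ⟨i, Or.inr (Or.inr (Or.inr (by
          simp [fv]; rw [← two_smul_eq]; abel)))⟩
      · -- e_i - (-e_i) = 2 e_i
        exact Or.inl ⟨i, Or.inr (Or.inr (Or.inl (by simp [fv, ← two_smul_eq])))⟩
      · exact absurd rfl h
    · cases bi <;> cases bj
      · -- -e_i + e_j = e_j - e_i, with j < i
        exact Or.inr ⟨j, i, hij, Or.inr (Or.inl (by simp [fv]; try abel))⟩
      · -- -e_i - e_j = -e_j - e_i
        exact Or.inr ⟨j, i, hij, Or.inr (Or.inr (Or.inr (by simp [fv]; try abel)))⟩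
      · -- e_i + e_j = e_j + e_i
        exact Or.inr ⟨j, i, hij, Or.inl (by simp [fv]; try abel)⟩
      · -- e_i - e_j = -e_j + e_i
        exact Or.inr ⟨j, i, hij, Or.inr (Or.inr (Or.inl (by simp [fv]; try abel)))⟩

/-- Every root is a difference of two distinct signed-index vectors. -/
lemma mem_repr {l : ℕ} {α : Fin l → ℝ} (h : α ∈ BCRoots l) :
    ∃ u v : SIdx l, u ≠ v ∧ α = fv l u - fv l v := by
  rcases h with ⟨i, h | h | h | h⟩ | ⟨i, j, hij, h | h | h | h⟩
  · exact ⟨some (i, true), none, by simp, by simp [fv, h]⟩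
  · exact ⟨some (i, false), none, by simp, by simp [fv, h]⟩
  · exact ⟨some (i, true), some (i, false), by simp, by simp [fv, h, ← two_smul_eq]⟩
  · exact ⟨some (i, false), some (i, true), by simp, by
      simp [fv, h]; try rw [← two_smul_eq]; try abel⟩
  · exact ⟨some (i, true), some (j, false), by simp [hij.ne], by simp [fv, h]; try abel⟩
  · exact ⟨some (i, true), some (j, true), by simp [hij.ne], by simp [fv, h]⟩
  · exact ⟨some (j, true), some (i, true), by simp [hij.ne'], by simp [fv, h]; try abel⟩
  · exact ⟨some (i, false), some (j, true), by simp [hij.ne], by simp [fv, h]; try abel⟩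

end BCAux

open BCAux in
/-- Every parabolic subset of the nonreduced root system `BC_l` is principal
parabolic. -/
theorem BC_parabolic_is_principal (l : ℕ) (hl : 1 ≤ l)
    (P : Set (Fin l → ℝ)) (hP : IsParabolicIn (BCRoots l) P) :
    IsPrincipalParabolicIn (BCRoots l) P := by
  classical
  obtain ⟨hunion, hclosed⟩ := hP
  have hPsub : P ⊆ BCRoots l := by
    intro x hx; rw [← hunion]; exact Or.inl hx
  -- the preorder
  set rel : SIdx l → SIdx l → Prop :=
    fun u v => fv l u = fv l v ∨ fv l u - fv l v ∈ P with hrel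
  have rel_refl : ∀ u, rel u u := fun u => Or.inl rfl
  have rel_total : ∀ u v, rel u v ∨ rel v u := by
    intro u v
    by_cases huv : u = v
    · exact Or.inl (huv ▸ rel_refl u)
    · have hR := diff_mem huv
      rw [← hunion] at hR
      rcases hR with h | h
      · exact Or.inl (Or.inr h)
      · refine Or.inr (Or.inr ?_)
        rw [Set.mem_neg, neg_sub] at h
        exact h
  have rel_trans : ∀ u v w, rel u v → rel v w → rel u w := by
    intro u v w huv hvw
    rcases huv with h1 | h1
    · rcases hvw with h2 | h2
      · exact Or.inl (h1.trans h2)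
      · exact Or.inr (by rw [h1]; exact h2)
    · rcases hvw with h2 | h2
      · exact Or.inr (by rw [← h2]; exact h1)
      · by_cases huw : u = w
        · exact huw ▸ rel_refl u
        · refine Or.inr ?_
          have : fv l u - fv l w = (fv l u - fv l v) + (fv l v - fv l w) := by abel
          rw [this]
          exact hclosed _ h1 _ h2 (this ▸ diff_mem huw)
  have rel_negneg : ∀ u v, rel u v ↔ rel (sneg v) (sneg u) := by
    intro u v
    simp only [hrel, fv_sneg, neg_sub_neg]
    constructor
    · rintro (h | h)
      · exact Or.inl (by rw [h])
      · exact Or.inr h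
    · rintro (h | h)
      · exact Or.inl (neg_injective h).symm
      · exact Or.inr h
  -- the rank function
  set rk : SIdx l → ℕ := fun u => (Finset.univ.filter (fun w => rel u w)).card with hrk
  have rk_le : ∀ u v, rel u v → rk v ≤ rk u := by
    intro u v h
    apply Finset.card_le_card
    intro w hw
    simp only [Finset.mem_filter, Finset.mem_univ, true_and] at hw ⊢
    exact rel_trans u v w h hw
  have rk_lt : ∀ u v, ¬ rel u v → rk u < rk v := by
    intro u v h
    have hvu : rel v u := (rel_total u v).resolve_left h
    apply Finset.card_lt_card
    constructor
    · intro w hw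
      simp only [Finset.mem_filter, Finset.mem_univ, true_and] at hw ⊢
      exact rel_trans v u w hvu hw
    · intro hsub
      have : v ∈ Finset.univ.filter (fun w => rel v w) := by
        simp [rel_refl v]
      have := hsub this
      simp only [Finset.mem_filter, Finset.mem_univ, true_and] at this
      exact h this
  -- the coefficient function
  set cf : SIdx l → ℝ := fun u => (rk u : ℝ) - (rk (sneg u) : ℝ) with hcf
  have sneg_sneg : ∀ u : SIdx l, sneg (sneg u) = u := by
    rintro (_ | ⟨i, b⟩)
    · rfl
    · cases b <;> rfl
  have cf_iff : ∀ u v, rel u v ↔ cf v ≤ cf u := by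
    intro u v
    constructor
    · intro h
      have h1 := rk_le u v h
      have h2 := rk_le (sneg v) (sneg u) ((rel_negneg u v).mp h)
      simp only [hcf]
      have c1 : (rk v : ℝ) ≤ rk u := by exact_mod_cast h1
      have c2 : (rk (sneg u) : ℝ) ≤ rk (sneg v) := by exact_mod_cast h2
      linarith
    · intro h
      by_contra hc
      have h1 := rk_lt u v hc
      have hc' : ¬ rel (sneg v) (sneg u) := fun hh => hc ((rel_negneg u v).mpr hh)
      have h2 := rk_lt (sneg v) (sneg u) hc'
      have c1 : (rk u : ℝ) < rk v := by exact_mod_cast h1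
      have c2 : (rk (sneg v) : ℝ) < rk (sneg u) := by exact_mod_cast h2
      simp only [hcf] at h
      linarith
  -- the linear functional
  set lam : (Fin l → ℝ) →ₗ[ℝ] ℝ :=
    ∑ i : Fin l, cf (some (i, true)) • LinearMap.proj i with hlam
  have lam_apply : ∀ x : Fin l → ℝ, lam x = ∑ i : Fin l, cf (some (i, true)) * x i := by
    intro x
    simp [hlam, LinearMap.sum_apply, LinearMap.smul_apply, LinearMap.proj_apply,
      smul_eq_mul]
  have lam_std : ∀ i : Fin l, lam (stdBasis l i) = cf (some (i, true)) := by
    intro i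
    rw [lam_apply]
    rw [Finset.sum_eq_single i]
    · simp [stdBasis]
    · intro j _ hj
      simp [stdBasis, Pi.single_apply, hj]
    · simp
  have lam_fv : ∀ u : SIdx l, lam (fv l u) = cf u := by
    rintro (_ | ⟨i, b⟩)
    · simp [fv, hcf, sneg]
    · cases b
      · show lam (-stdBasis l i) = cf (some (i, false))
        rw [map_neg, lam_std]
        have : sneg (some (i, false)) = some (i, true) := rfl
        simp only [hcf, this]
        have : sneg (some (i, true)) = some (i, false) := rfl
        rw [this]
        ring
      · exact lam_std i
  refine ⟨lam, ?_⟩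
  ext α
  constructor
  · intro hα
    have hR := hPsub hα
    refine ⟨hR, ?_⟩
    obtain ⟨u, v, huv, hrepr⟩ := mem_repr hR
    have hrel : rel u v := Or.inr (hrepr ▸ hα)
    have := (cf_iff u v).mp hrel
    rw [hrepr, map_sub, lam_fv, lam_fv]
    linarith
  · rintro ⟨hR, hge⟩
    obtain ⟨u, v, huv, hrepr⟩ := mem_repr hR
    have hc : cf v ≤ cf u := by
      rw [hrepr, map_sub, lam_fv, lam_fv] at hge
      linarith
    rcases (cf_iff u v).mpr hc with he | hmem
    · exfalso
      have : α = 0 := by rw [hrepr, he, sub_self]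
      exact zero_not_mem l (this ▸ hR)
    · exact hrepr ▸ hmem
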